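/- Define G₀(x) = max(0, min(1, 2x - 1/2)) and, for z ∈ [0,1], the step function T_z(x) = 1 if x ≥ z and 0 otherwise. Then C(T_z) := 2 ∫_z^1 ∫_0^z (1 - G₀(x) + G₀(y)) dy dx = 2(z·Υ(1-z) + (1-z)·Υ(z)) where Υ(z) = ∫₀ᶻ G₀(t) dt, and C(T_z) ≤ 1/8 with equality iff z ∈ [1/4, 3/4]. -/

import Mathlib

open MeasureTheory Set

/-- The cdf of the uniform distribution on `[1/4, 3/4]`. -/
noncomputable def G₀ (x : ℝ) : ℝ := max 0 (min 1 (2 * x - 1/2))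

/-- `Υ(z) = ∫₀ᶻ G₀(t) dt`. -/
noncomputable def Υ (z : ℝ) : ℝ := ∫ t in (0:ℝ)..z, G₀ t

lemma G0_cont : Continuous G₀ := by
  unfold G₀; fun_prop

lemma G0_int (a b : ℝ) : IntervalIntegrable G₀ MeasureTheory.volume a b :=
  G0_cont.intervalIntegrable a b

lemma G0_eq1 {t : ℝ} (h : t ≤ 1/4) : G₀ t = 0 := by
  unfold G₀
  rw [max_eq_left]
  exact le_trans (min_le_right _ _) (by linarith)

lemma G0_eq2 {t : ℝ} (h1 : 1/4 ≤ t) (h2 : t ≤ 3/4) : G₀ t = 2*t - 1/2 := by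
  unfold G₀
  rw [min_eq_right (by linarith), max_eq_right (by linarith)]

lemma G0_eq3 {t : ℝ} (h : 3/4 ≤ t) : G₀ t = 1 := by
  unfold G₀
  rw [min_eq_left (by linarith), max_eq_right (by norm_num)]

lemma Ups1 {z : ℝ} (h0 : 0 ≤ z) (h : z ≤ 1/4) : Υ z = 0 := by
  unfold Υ
  rw [intervalIntegral.integral_congr (g := fun _ => (0:ℝ))
    (fun t ht => by
      rw [uIcc_of_le h0] at ht
      exact G0_eq1 (le_trans ht.2 h))]
  simp

lemma Ups2 {z : ℝ} (h1 : 1/4 ≤ z) (h2 : z ≤ 3/4) : Υ z = (z - 1/4)^2 := by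
  unfold Υ
  rw [← intervalIntegral.integral_add_adjacent_intervals (b := 1/4) (G0_int _ _) (G0_int _ _)]
  have e1 : (∫ t in (0:ℝ)..1/4, G₀ t) = 0 := by
    rw [intervalIntegral.integral_congr (g := fun _ => (0:ℝ))
      (fun t ht => by
        rw [uIcc_of_le (by norm_num : (0:ℝ) ≤ 1/4)] at ht
        exact G0_eq1 ht.2)]
    simp
  have e2 : (∫ t in (1/4:ℝ)..z, G₀ t) = (z - 1/4)^2 := by
    rw [intervalIntegral.integral_congr (g := fun t => 2*t - 1/2)
      (fun t ht => by
        rw [uIcc_of_le h1] at ht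
        exact G0_eq2 ht.1 (le_trans ht.2 h2))]
    rw [intervalIntegral.integral_eq_sub_of_hasDerivAt
      (f := fun t => t^2 - t/2) (f' := fun t => 2*t - 1/2)
      (fun x _ => by
        have h := ((hasDerivAt_pow 2 x).sub ((hasDerivAt_id x).div_const 2))
        convert h using 1
        · funext t; simp [id]
        · norm_num)
      (((continuous_const.mul continuous_id').sub continuous_const).intervalIntegrable _ _)]
    ring
  rw [e1, e2]; ring

lemma Ups3 {z : ℝ} (h : 3/4 ≤ z) : Υ z = z - 1/2 := by
  unfold Υ
  rw [← intervalIntegral.integral_add_adjacent_intervals (b := 3/4) (G0_int _ _) (G0_int _ _)]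
  have e1 : (∫ t in (0:ℝ)..3/4, G₀ t) = 1/4 := by
    have h2 := Ups2 (z := 3/4) (by norm_num) (by norm_num)
    unfold Υ at h2
    rw [h2]; norm_num
  have e2 : (∫ t in (3/4:ℝ)..z, G₀ t) = z - 3/4 := by
    rw [intervalIntegral.integral_congr (g := fun _ => (1:ℝ))
      (fun t ht => by
        rw [uIcc_of_le h] at ht
        exact G0_eq3 ht.1)]
    simp
  rw [e1, e2]; ring

lemma Ups_sym {z : ℝ} (h0 : 0 ≤ z) (h1 : z ≤ 1) : Υ (1 - z) = 1/2 - z + Υ z := by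
  rcases le_or_gt z (1/4) with h | h
  · rw [Ups1 h0 h, Ups3 (by linarith)]; ring
  rcases le_or_gt z (3/4) with h' | h'
  · rw [Ups2 h.le h', Ups2 (by linarith) (by linarith)]; ring
  · rw [Ups3 h'.le, Ups1 (by linarith) (by linarith)]; ring

/-- For the step function `T_z`, the quantity
`C(T_z) = 2 ∫_z^1 ∫_0^z (1 - G₀(x) + G₀(y)) dy dx` equals
`2(z·Υ(1-z) + (1-z)·Υ(z))`, and `C(T_z) ≤ 1/8` with equality iff `z ∈ [1/4, 3/4]`. -/
theorem stmt_5 : ∀ z ∈ Icc (0:ℝ) 1,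
    (2 * ∫ x in z..(1:ℝ), ∫ y in (0:ℝ)..z, (1 - G₀ x + G₀ y))
      = 2 * (z * Υ (1 - z) + (1 - z) * Υ z) ∧
    (2 * ∫ x in z..(1:ℝ), ∫ y in (0:ℝ)..z, (1 - G₀ x + G₀ y)) ≤ 1/8 ∧
    ((2 * ∫ x in z..(1:ℝ), ∫ y in (0:ℝ)..z, (1 - G₀ x + G₀ y)) = 1/8
      ↔ z ∈ Icc (1/4 : ℝ) (3/4)) := by
  intro z hz
  obtain ⟨hz0, hz1⟩ := hz
  have inner : ∀ x : ℝ, (∫ y in (0:ℝ)..z, (1 - G₀ x + G₀ y))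
      = (z + Υ z) - z * G₀ x := by
    intro x
    rw [intervalIntegral.integral_add intervalIntegrable_const (G0_int _ _)]
    simp only [intervalIntegral.integral_const, smul_eq_mul, sub_zero]
    unfold Υ
    ring
  have outer : (∫ x in z..(1:ℝ), ∫ y in (0:ℝ)..z, (1 - G₀ x + G₀ y))
      = z * Υ (1 - z) + (1 - z) * Υ z := by
    simp_rw [inner]
    rw [intervalIntegral.integral_sub intervalIntegrable_const ((G0_int _ _).const_mul _),
        intervalIntegral.integral_const_mul]
    have hsplit : (∫ x in z..(1:ℝ), G₀ x) = Υ 1 - Υ z := by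
      have h := intervalIntegral.integral_add_adjacent_intervals
        (a := (0:ℝ)) (b := z) (c := 1) (G0_int _ _) (G0_int _ _)
      unfold Υ
      linarith
    rw [hsplit, Ups3 (by norm_num : (3/4:ℝ) ≤ 1), Ups_sym hz0 hz1]
    simp only [intervalIntegral.integral_const, smul_eq_mul]
    ring
  rw [outer]
  refine ⟨rfl, ?_⟩
  rcases le_or_gt z (1/4) with h | h
  · rw [Ups1 hz0 h, Ups3 (by linarith)]
    constructor
    · nlinarith [sq_nonneg (z - 1/4)]
    constructor
    · intro he
      have hzz : z = 1/4 := by nlinarith [sq_nonneg (z - 1/4)]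
      rw [hzz, mem_Icc]
      norm_num
    · intro hm
      have hzz : z = 1/4 := le_antisymm h hm.1
      rw [hzz]; norm_num
  rcases le_or_gt z (3/4) with h' | h'
  · rw [Ups2 h.le h', Ups2 (by linarith) (by linarith)]
    have he : 2 * (z * (1 - z - 1/4)^2 + (1 - z) * (z - 1/4)^2) = 1/8 := by ring
    exact ⟨le_of_eq he, fun _ => mem_Icc.mpr ⟨h.le, h'⟩, fun _ => he⟩
  · rw [Ups1 (z := 1 - z) (by linarith) (by linarith), Ups3 h'.le]
    constructor
    · nlinarith [sq_nonneg (z - 3/4)]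
    constructor
    · intro he
      exfalso
      nlinarith [sq_nonneg (z - 3/4)]
    · intro hm
      exact absurd hm.2 (not_le.mpr h')
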